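/- For all a, b > 0 with a ≠ b, G(a,b)^(5/9) · C(a,b)^(4/9) < M(a,b) < C(a,b), and these bounds are sharp: G^α C^(1-α) < M for all a ≠ b iff α ≥ 5/9, and M < G^β C^(1-β) for all a ≠ b iff β ≤ 0. -/

import Mathlib

noncomputable def M (a b : ℝ) : ℝ := (a - b) / (2 * Real.arsinh ((a - b) / (a + b)))
noncomputable def G (a b : ℝ) : ℝ := Real.sqrt (a * b)
noncomputable def C (a b : ℝ) : ℝ := (a ^ 2 + b ^ 2) / (a + b)

open Real Set

lemma cert_pos (t u : ℝ) (ht : 0 < t) (hu : 0 < u) :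
    (0:ℝ) < 4052555153018976267*u^38 + 130348852164593903304*t*u^37 + 2017922308477955182431*t^2*u^36 + 20032841901941011792674*t^3*u^35 + 143473968963802641464001*t^4*u^34 + 791396946995156798572476*t^5*u^33 + 3508437704027112558414990*t^6*u^32 + 12892838405997466593493380*t^7*u^31 + 40230830000841468552169758*t^8*u^30 + 108700758027547873139976192*t^9*u^29 + 258398456112828287446944942*t^10*u^28 + 547289247206960619645440340*t^11*u^27 + 1042647236855824576687775730*t^12*u^26 + 1798708124547900236466342792*t^13*u^25 + 2822474994449777711594382573*t^14*u^24 + 4040246508091508638123868538*t^15*u^23 + 5285823121713195602062734375*t^16*u^22 + 6328017290711348381784375000*t^17*u^21 + 6936978762791335183876171875*t^18*u^20 + 6964923278064288955253906250*t^19*u^19 + 6403307004661654706923828125*t^20*u^18 + 5386830620309117726835937500*t^21*u^17 + 4141842920781498146601562500*t^22*u^16 + 2905703082505075050000000000*t^23*u^15 + 1855770778061507615625000000*t^24*u^14 + 1075845515490988312500000000*t^25*u^13 + 564075901588506187500000000*t^26*u^12 + 266259814864301250000000000*t^27*u^11 + 112510482225429375000000000*t^28*u^10 + 42260483975062500000000000*t^29*u^9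 + 13985620557187500000000000*t^30*u^8 + 4032156186000000000000000*t^31*u^7 + 998030686500000000000000*t^32*u^6 + 207977490000000000000000*t^33*u^5 + 35512480000000000000000*t^34*u^4 + 4774900000000000000000*t^35*u^3 + 474450000000000000000*t^36*u^2 + 31000000000000000000*t^37*u + 1000000000000000000*t^38 := by
  have h0 : (0:ℝ) < 4052555153018976267*u^38 := mul_pos (by norm_num : (0:ℝ) < 4052555153018976267) (pow_pos hu 38)
  have h1 : (0:ℝ) < 130348852164593903304*t*u^37 := mul_pos (mul_pos (by norm_num : (0:ℝ) < 130348852164593903304) ht) (pow_pos hu 37)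
  have h2 : (0:ℝ) < 2017922308477955182431*t^2*u^36 := mul_pos (mul_pos (by norm_num : (0:ℝ) < 2017922308477955182431) (pow_pos ht 2)) (pow_pos hu 36)
  have h3 : (0:ℝ) < 20032841901941011792674*t^3*u^35 := mul_pos (mul_pos (by norm_num : (0:ℝ) < 20032841901941011792674) (pow_pos ht 3)) (pow_pos hu 35)
  have h4 : (0:ℝ) < 143473968963802641464001*t^4*u^34 := mul_pos (mul_pos (by norm_num : (0:ℝ) < 143473968963802641464001) (pow_pos ht 4)) (pow_pos hu 34)
  have h5 : (0:ℝ) < 791396946995156798572476*t^5*u^33 := mul_pos (mul_pos (by norm_num : (0:ℝ) < 791396946995156798572476) (pow_pos ht 5)) (pow_pos hu 33)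
  have h6 : (0:ℝ) < 3508437704027112558414990*t^6*u^32 := mul_pos (mul_pos (by norm_num : (0:ℝ) < 3508437704027112558414990) (pow_pos ht 6)) (pow_pos hu 32)
  have h7 : (0:ℝ) < 12892838405997466593493380*t^7*u^31 := mul_pos (mul_pos (by norm_num : (0:ℝ) < 12892838405997466593493380) (pow_pos ht 7)) (pow_pos hu 31)
  have h8 : (0:ℝ) < 40230830000841468552169758*t^8*u^30 := mul_pos (mul_pos (by norm_num : (0:ℝ) < 40230830000841468552169758) (pow_pos ht 8)) (pow_pos hu 30)
  have h9 : (0:ℝ) < 108700758027547873139976192*t^9*u^29 := mul_pos (mul_pos (by norm_num : (0:ℝ) < 108700758027547873139976192) (pow_pos ht 9)) (pow_pos hu 29)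
  have h10 : (0:ℝ) < 258398456112828287446944942*t^10*u^28 := mul_pos (mul_pos (by norm_num : (0:ℝ) < 258398456112828287446944942) (pow_pos ht 10)) (pow_pos hu 28)
  have h11 : (0:ℝ) < 547289247206960619645440340*t^11*u^27 := mul_pos (mul_pos (by norm_num : (0:ℝ) < 547289247206960619645440340) (pow_pos ht 11)) (pow_pos hu 27)
  have h12 : (0:ℝ) < 1042647236855824576687775730*t^12*u^26 := mul_pos (mul_pos (by norm_num : (0:ℝ) < 1042647236855824576687775730) (pow_pos ht 12)) (pow_pos hu 26)
  have h13 : (0:ℝ) < 1798708124547900236466342792*t^13*u^25 := mul_pos (mul_pos (by norm_num : (0:ℝ) < 1798708124547900236466342792) (pow_pos ht 13)) (pow_pos hu 25)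
  have h14 : (0:ℝ) < 2822474994449777711594382573*t^14*u^24 := mul_pos (mul_pos (by norm_num : (0:ℝ) < 2822474994449777711594382573) (pow_pos ht 14)) (pow_pos hu 24)
  have h15 : (0:ℝ) < 4040246508091508638123868538*t^15*u^23 := mul_pos (mul_pos (by norm_num : (0:ℝ) < 4040246508091508638123868538) (pow_pos ht 15)) (pow_pos hu 23)
  have h16 : (0:ℝ) < 5285823121713195602062734375*t^16*u^22 := mul_pos (mul_pos (by norm_num : (0:ℝ) < 5285823121713195602062734375) (pow_pos ht 16)) (pow_pos hu 22)
  have h17 : (0:ℝ) < 6328017290711348381784375000*t^17*u^21 := mul_pos (mul_pos (by norm_num : (0:ℝ) < 6328017290711348381784375000) (pow_pos ht 17)) (pow_pos hu 21)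
  have h18 : (0:ℝ) < 6936978762791335183876171875*t^18*u^20 := mul_pos (mul_pos (by norm_num : (0:ℝ) < 6936978762791335183876171875) (pow_pos ht 18)) (pow_pos hu 20)
  have h19 : (0:ℝ) < 6964923278064288955253906250*t^19*u^19 := mul_pos (mul_pos (by norm_num : (0:ℝ) < 6964923278064288955253906250) (pow_pos ht 19)) (pow_pos hu 19)
  have h20 : (0:ℝ) < 6403307004661654706923828125*t^20*u^18 := mul_pos (mul_pos (by norm_num : (0:ℝ) < 6403307004661654706923828125) (pow_pos ht 20)) (pow_pos hu 18)
  have h21 : (0:ℝ) < 5386830620309117726835937500*t^21*u^17 := mul_pos (mul_pos (by norm_num : (0:ℝ) < 5386830620309117726835937500) (pow_pos ht 21)) (pow_pos hu 17)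
  have h22 : (0:ℝ) < 4141842920781498146601562500*t^22*u^16 := mul_pos (mul_pos (by norm_num : (0:ℝ) < 4141842920781498146601562500) (pow_pos ht 22)) (pow_pos hu 16)
  have h23 : (0:ℝ) < 2905703082505075050000000000*t^23*u^15 := mul_pos (mul_pos (by norm_num : (0:ℝ) < 2905703082505075050000000000) (pow_pos ht 23)) (pow_pos hu 15)
  have h24 : (0:ℝ) < 1855770778061507615625000000*t^24*u^14 := mul_pos (mul_pos (by norm_num : (0:ℝ) < 1855770778061507615625000000) (pow_pos ht 24)) (pow_pos hu 14)
  have h25 : (0:ℝ) < 1075845515490988312500000000*t^25*u^13 := mul_pos (mul_pos (by norm_num : (0:ℝ) < 1075845515490988312500000000) (pow_pos ht 25)) (pow_pos hu 13)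
  have h26 : (0:ℝ) < 564075901588506187500000000*t^26*u^12 := mul_pos (mul_pos (by norm_num : (0:ℝ) < 564075901588506187500000000) (pow_pos ht 26)) (pow_pos hu 12)
  have h27 : (0:ℝ) < 266259814864301250000000000*t^27*u^11 := mul_pos (mul_pos (by norm_num : (0:ℝ) < 266259814864301250000000000) (pow_pos ht 27)) (pow_pos hu 11)
  have h28 : (0:ℝ) < 112510482225429375000000000*t^28*u^10 := mul_pos (mul_pos (by norm_num : (0:ℝ) < 112510482225429375000000000) (pow_pos ht 28)) (pow_pos hu 10)
  have h29 : (0:ℝ) < 42260483975062500000000000*t^29*u^9 := mul_pos (mul_pos (by norm_num : (0:ℝ) < 42260483975062500000000000) (pow_pos ht 29)) (pow_pos hu 9)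
  have h30 : (0:ℝ) < 13985620557187500000000000*t^30*u^8 := mul_pos (mul_pos (by norm_num : (0:ℝ) < 13985620557187500000000000) (pow_pos ht 30)) (pow_pos hu 8)
  have h31 : (0:ℝ) < 4032156186000000000000000*t^31*u^7 := mul_pos (mul_pos (by norm_num : (0:ℝ) < 4032156186000000000000000) (pow_pos ht 31)) (pow_pos hu 7)
  have h32 : (0:ℝ) < 998030686500000000000000*t^32*u^6 := mul_pos (mul_pos (by norm_num : (0:ℝ) < 998030686500000000000000) (pow_pos ht 32)) (pow_pos hu 6)
  have h33 : (0:ℝ) < 207977490000000000000000*t^33*u^5 := mul_pos (mul_pos (by norm_num : (0:ℝ) < 207977490000000000000000) (pow_pos ht 33)) (pow_pos hu 5)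
  have h34 : (0:ℝ) < 35512480000000000000000*t^34*u^4 := mul_pos (mul_pos (by norm_num : (0:ℝ) < 35512480000000000000000) (pow_pos ht 34)) (pow_pos hu 4)
  have h35 : (0:ℝ) < 4774900000000000000000*t^35*u^3 := mul_pos (mul_pos (by norm_num : (0:ℝ) < 4774900000000000000000) (pow_pos ht 35)) (pow_pos hu 3)
  have h36 : (0:ℝ) < 474450000000000000000*t^36*u^2 := mul_pos (mul_pos (by norm_num : (0:ℝ) < 474450000000000000000) (pow_pos ht 36)) (pow_pos hu 2)
  have h37 : (0:ℝ) < 31000000000000000000*t^37*u := mul_pos (mul_pos (by norm_num : (0:ℝ) < 31000000000000000000) (pow_pos ht 37)) hu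
  have h38 : (0:ℝ) < 1000000000000000000*t^38 := mul_pos (by norm_num : (0:ℝ) < 1000000000000000000) (pow_pos ht 38)
  linarith

lemma cert_identity (t : ℝ) :
    (9 - 3*t + 4*t^2)^18 - 9^18 * (1-t)^23 * (1+t)^17
      = t^2 * (4052555153018976267*(1-t)^38 + 130348852164593903304*t*(1-t)^37 + 2017922308477955182431*t^2*(1-t)^36 + 20032841901941011792674*t^3*(1-t)^35 + 143473968963802641464001*t^4*(1-t)^34 + 791396946995156798572476*t^5*(1-t)^33 + 3508437704027112558414990*t^6*(1-t)^32 + 12892838405997466593493380*t^7*(1-t)^31 + 40230830000841468552169758*t^8*(1-t)^30 + 108700758027547873139976192*t^9*(1-t)^29 + 258398456112828287446944942*t^10*(1-t)^28 + 547289247206960619645440340*t^11*(1-t)^27 + 1042647236855824576687775730*t^12*(1-t)^26 + 1798708124547900236466342792*t^13*(1-t)^25 + 2822474994449777711594382573*t^14*(1-t)^24 + 4040246508091508638123868538*t^15*(1-t)^23 + 5285823121713195602062734375*t^16*(1-t)^22 + 6328017290711348381784375000*t^17*(1-t)^21 + 6936978762791335183876171875*t^18*(1-t)^20 + 6964923278064288955253906250*t^19*(1-t)^19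 + 6403307004661654706923828125*t^20*(1-t)^18 + 5386830620309117726835937500*t^21*(1-t)^17 + 4141842920781498146601562500*t^22*(1-t)^16 + 2905703082505075050000000000*t^23*(1-t)^15 + 1855770778061507615625000000*t^24*(1-t)^14 + 1075845515490988312500000000*t^25*(1-t)^13 + 564075901588506187500000000*t^26*(1-t)^12 + 266259814864301250000000000*t^27*(1-t)^11 + 112510482225429375000000000*t^28*(1-t)^10 + 42260483975062500000000000*t^29*(1-t)^9 + 13985620557187500000000000*t^30*(1-t)^8 + 4032156186000000000000000*t^31*(1-t)^7 + 998030686500000000000000*t^32*(1-t)^6 + 207977490000000000000000*t^33*(1-t)^5 + 35512480000000000000000*t^34*(1-t)^4 + 4774900000000000000000*t^35*(1-t)^3 + 474450000000000000000*t^36*(1-t)^2 + 31000000000000000000*t^37*(1-t) + 1000000000000000000*t^38) := by ring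


section helpers
variable {x : ℝ}

lemma poly_lt {t : ℝ} (ht : 0 < t) (ht1 : t < 1) :
    9^18 * (1-t)^23 * (1+t)^17 < (9 - 3*t + 4*t^2)^18 := by
  have hu : (0:ℝ) < 1 - t := by linarith
  have hid := cert_identity t
  have hpos := mul_pos (pow_pos ht 2) (cert_pos t (1-t) ht hu)
  linarith

lemma hA' (hx1 : x < 1) (hx : 0 < x) : (0:ℝ) < 1 - x^2 := by nlinarith
lemma hB' : (0:ℝ) < 1 + x^2 := by positivity

lemma inv_sqrt_lt (hx : 0 < x) (hx1 : x < 1) :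
    (√(1 + x^2))⁻¹ < (1-x^2)^(-(23:ℝ)/18) * (1+x^2)^(-(13:ℝ)/9) * ((9 - 3*x^2 + 4*(x^2)^2)/9) := by
  have hA : (0:ℝ) < 1 - x^2 := hA' hx1 hx
  have hB : (0:ℝ) < 1 + x^2 := hB'
  have hx2 : 0 < x^2 := by positivity
  have hx21 : x^2 < 1 := by nlinarith
  have hp := poly_lt hx2 hx21
  have h1 : (1-x^2)^((23:ℝ)/18) * (1+x^2)^((17:ℝ)/18) < (9 - 3*x^2 + 4*(x^2)^2)/9 := by
    apply lt_of_pow_lt_pow_left₀ 18 (by nlinarith)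
    have e1 : ((1-x^2)^((23:ℝ)/18))^(18:ℕ) = (1-x^2)^(23:ℕ) := by
      rw [← Real.rpow_natCast ((1-x^2)^((23:ℝ)/18)) 18, ← Real.rpow_mul hA.le,
        ← Real.rpow_natCast (1-x^2) 23]
      norm_num
    have e2 : ((1+x^2)^((17:ℝ)/18))^(18:ℕ) = (1+x^2)^(17:ℕ) := by
      rw [← Real.rpow_natCast ((1+x^2)^((17:ℝ)/18)) 18, ← Real.rpow_mul hB.le,
        ← Real.rpow_natCast (1+x^2) 17]
      norm_num
    rw [mul_pow, e1, e2, div_pow, lt_div_iff₀ (by positivity)]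
    exact lt_of_eq_of_lt (by ring) hp
  have key : (√(1 + x^2))⁻¹
      = (1-x^2)^(-(23:ℝ)/18) * (1+x^2)^(-(13:ℝ)/9) * ((1-x^2)^((23:ℝ)/18) * (1+x^2)^((17:ℝ)/18)) := by
    have e : (1-x^2)^(-(23:ℝ)/18) * (1+x^2)^(-(13:ℝ)/9) * ((1-x^2)^((23:ℝ)/18) * (1+x^2)^((17:ℝ)/18))
        = ((1-x^2)^(-(23:ℝ)/18) * (1-x^2)^((23:ℝ)/18)) * ((1+x^2)^(-(13:ℝ)/9) * (1+x^2)^((17:ℝ)/18)) := by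
      ring
    rw [e, ← Real.rpow_add hA, ← Real.rpow_add hB]
    norm_num
    rw [Real.rpow_neg hB.le, Real.sqrt_eq_rpow]
  rw [key]
  have hpos : (0:ℝ) < (1-x^2)^(-(23:ℝ)/18) * (1+x^2)^(-(13:ℝ)/9) :=
    mul_pos (Real.rpow_pos_of_pos hA _) (Real.rpow_pos_of_pos hB _)
  calc (1-x^2)^(-(23:ℝ)/18) * (1+x^2)^(-(13:ℝ)/9) * ((1-x^2)^((23:ℝ)/18) * (1+x^2)^((17:ℝ)/18))
      < (1-x^2)^(-(23:ℝ)/18) * (1+x^2)^(-(13:ℝ)/9) * ((9 - 3*x^2 + 4*(x^2)^2)/9) := by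
        exact mul_lt_mul_of_pos_left h1 hpos
    _ = _ := rfl

lemma hasDerivAt_u (hx : 0 < x) (hx1 : x < 1) :
    HasDerivAt (fun y => y * (1-y^2) ^ (-(5:ℝ)/18) * (1+y^2) ^ (-(4:ℝ)/9))
      ((1-x^2) ^ (-(23:ℝ)/18) * (1+x^2) ^ (-(13:ℝ)/9) * ((9 - 3*x^2 + 4*(x^2)^2)/9)) x := by
  have hA : (0:ℝ) < 1 - x^2 := hA' hx1 hx
  have hB : (0:ℝ) < 1 + x^2 := hB'
  have d1 : HasDerivAt (fun y:ℝ => 1 - y^2) (-(2*x)) x := by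
    simpa using (hasDerivAt_pow 2 x).const_sub 1
  have d2 : HasDerivAt (fun y:ℝ => 1 + y^2) (2*x) x := by
    simpa using (hasDerivAt_pow 2 x).const_add 1
  have dv : HasDerivAt (fun y:ℝ => (1-y^2) ^ (-(5:ℝ)/18))
      (-(2*x) * (-(5:ℝ)/18) * (1-x^2) ^ (-(5:ℝ)/18 - 1)) x :=
    d1.rpow_const (Or.inl hA.ne')
  have dw : HasDerivAt (fun y:ℝ => (1+y^2) ^ (-(4:ℝ)/9))
      ((2*x) * (-(4:ℝ)/9) * (1+x^2) ^ (-(4:ℝ)/9 - 1)) x :=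
    d2.rpow_const (Or.inl hB.ne')
  have dmain := ((hasDerivAt_id x).mul dv).mul dw
  refine dmain.congr_deriv ?_
  simp only [Pi.mul_apply]
  have eA : (1-x^2:ℝ) ^ (-(5:ℝ)/18) = (1-x^2) * (1-x^2) ^ (-(23:ℝ)/18) := by
    rw [show (-(5:ℝ)/18) = 1 + (-(23:ℝ)/18) by norm_num, Real.rpow_add hA, Real.rpow_one]
  have eA' : (1-x^2:ℝ) ^ (-(5:ℝ)/18 - 1) = (1-x^2) ^ (-(23:ℝ)/18) := by
    norm_num
  have eB : (1+x^2:ℝ) ^ (-(4:ℝ)/9) = (1+x^2) * (1+x^2) ^ (-(13:ℝ)/9) := by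
    rw [show (-(4:ℝ)/9) = 1 + (-(13:ℝ)/9) by norm_num, Real.rpow_add hB, Real.rpow_one]
  have eB' : (1+x^2:ℝ) ^ (-(4:ℝ)/9 - 1) = (1+x^2) ^ (-(13:ℝ)/9) := by
    norm_num
  rw [eA', eB', eA, eB, id_eq]
  ring

lemma arsinh_lt_u (hx : 0 < x) (hx1 : x < 1) :
    arsinh x < x * (1-x^2) ^ (-(5:ℝ)/18) * (1+x^2) ^ (-(4:ℝ)/9) := by
  set F : ℝ → ℝ := fun y => y * (1-y^2) ^ (-(5:ℝ)/18) * (1+y^2) ^ (-(4:ℝ)/9) - arsinh y with hF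
  have cont : ContinuousOn F (Ico 0 1) := by
    have hne : ∀ y ∈ Ico (0:ℝ) 1, (1 - y^2) ≠ 0 := by
      intro y hy
      have : (0:ℝ) < 1 - y^2 := by nlinarith [hy.1, hy.2]
      exact this.ne'
    have c1 : ContinuousOn (fun y:ℝ => (1-y^2) ^ (-(5:ℝ)/18)) (Ico 0 1) :=
      ContinuousOn.rpow_const (by fun_prop) (fun y hy => Or.inl (hne y hy))
    have c2 : ContinuousOn (fun y:ℝ => (1+y^2) ^ (-(4:ℝ)/9)) (Ico 0 1) :=
      ContinuousOn.rpow_const (by fun_prop) (fun y hy => Or.inl (by positivity))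
    exact ((continuousOn_id.mul c1).mul c2).sub Real.continuous_arsinh.continuousOn
  have dpos : ∀ y ∈ interior (Ico (0:ℝ) 1), 0 < deriv F y := by
    intro y hy
    rw [interior_Ico, mem_Ioo] at hy
    have hd : HasDerivAt F _ y := (hasDerivAt_u hy.1 hy.2).sub (Real.hasDerivAt_arsinh y)
    rw [hd.deriv]
    have := inv_sqrt_lt hy.1 hy.2
    linarith
  have mono := strictMonoOn_of_deriv_pos (convex_Ico (0:ℝ) 1) cont dpos
  have h0 : F 0 < F x := mono (by constructor <;> norm_num) (by exact ⟨hx.le, hx1⟩) hx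
  have : F 0 = 0 := by simp [hF]
  have := h0
  simp only [hF] at this ⊢
  rw [‹F 0 = 0›] at h0
  simp only [hF] at h0
  linarith

lemma lt_arsinh_cubic (hx : 0 < x) (hx1 : x < 1) : x - x^3/6 < arsinh x := by
  set F : ℝ → ℝ := fun y => arsinh y - (y - y^3/6) with hF
  have cont : ContinuousOn F (Ico 0 1) := by
    apply Real.continuous_arsinh.continuousOn.sub
    fun_prop
  have dpos : ∀ y ∈ interior (Ico (0:ℝ) 1), 0 < deriv F y := by
    intro y hy
    rw [interior_Ico, mem_Ioo] at hy
    have d2 : HasDerivAt (fun z:ℝ => z - z^3/6) (1 - 3*y^2/6) y := by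
      exact ((hasDerivAt_id y).sub ((hasDerivAt_pow 3 y).div_const 6)).congr_deriv (by norm_num)
    have hd : HasDerivAt F _ y := (Real.hasDerivAt_arsinh y).sub d2
    rw [hd.deriv]
    have hBs : (0:ℝ) < √(1 + y^2) := Real.sqrt_pos.2 (by positivity)
    have hlt : √(1 + y^2) < (1 - y^2/2)⁻¹ := by
      have hden : (0:ℝ) < 1 - y^2/2 := by nlinarith [hy.1, hy.2]
      rw [show (1 - y^2/2)⁻¹ = 1/(1 - y^2/2) by ring]
      rw [Real.sqrt_lt' (div_pos one_pos hden)]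
      rw [div_pow, one_pow, lt_div_iff₀ (by positivity)]
      nlinarith [hy.1, hy.2, mul_pos (pow_pos hy.1 4) (by nlinarith [hy.2] : (0:ℝ) < 3 - y^2)]
    have h2 : 1 - y^2/2 < (√(1 + y^2))⁻¹ := by
      have h3 : (0:ℝ) < 1 - y^2/2 := by nlinarith [hy.1, hy.2]
      calc 1 - y^2/2 = ((1 - y^2/2)⁻¹)⁻¹ := by rw [inv_inv]
        _ < (√(1 + y^2))⁻¹ := by
            exact inv_strictAnti₀ hBs hlt
    linarith
  have mono := strictMonoOn_of_deriv_pos (convex_Ico (0:ℝ) 1) cont dpos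
  have h0 : F 0 < F x := mono (by constructor <;> norm_num) ⟨hx.le, hx1⟩ hx
  simp only [hF, Real.arsinh_zero] at h0
  norm_num at h0
  linarith

lemma arsinh_lt_self (hx : 0 < x) : arsinh x < x := by
  have h := Real.self_lt_sinh_iff.2 (Real.arsinh_pos_iff.2 hx)
  rwa [Real.sinh_arsinh] at h


lemma G_symm (a b : ℝ) : G a b = G b a := by unfold G; rw [mul_comm]
lemma C_symm (a b : ℝ) : C a b = C b a := by unfold C; rw [add_comm (a^2), add_comm a]
lemma M_symm (a b : ℝ) : M a b = M b a := by
  unfold M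
  rw [show b - a = -(a-b) by ring, show b + a = a + b by ring,
    show (-(a-b))/(a+b) = -((a-b)/(a+b)) from neg_div _ _, Real.arsinh_neg]
  ring

lemma key1 (a b : ℝ) (ha : 0 < a) (hb : 0 < b) (hba : b < a) :
    G a b ^ ((5:ℝ)/9) * C a b ^ ((4:ℝ)/9) < M a b ∧ M a b < C a b := by
  have hs : (0:ℝ) < a + b := by linarith
  set s := a + b with hsdef
  set x := (a - b) / s with hxdef
  have hx : 0 < x := div_pos (by linarith) hs
  have hx1 : x < 1 := (div_lt_one hs).2 (by linarith)
  have hA : (0:ℝ) < 1 - x^2 := hA' hx1 hx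
  have hB : (0:ℝ) < 1 + x^2 := hB'
  have harsinh : 0 < arsinh x := Real.arsinh_pos_iff.2 hx
  have hG : G a b = (s/2) * √(1-x^2) := by
    unfold G
    rw [show a*b = (s/2)^2 * (1-x^2) by rw [hxdef, hsdef]; field_simp; ring,
      Real.sqrt_mul (by positivity), Real.sqrt_sq (by positivity)]
  have hC : C a b = (s/2) * (1+x^2) := by
    unfold C
    rw [hxdef, hsdef]
    field_simp
    ring
  have hM : M a b = (s/2) * (x / arsinh x) := by
    unfold M
    have hab : a - b = s * x := by rw [hxdef]; field_simp
    rw [← hsdef, ← hxdef, hab]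
    field_simp
  constructor
  · rw [hG, hC, hM]
    have hsp : (0:ℝ) < s/2 := by positivity
    have hsplit : ((s/2) * √(1-x^2)) ^ ((5:ℝ)/9) * ((s/2)*(1+x^2)) ^ ((4:ℝ)/9)
        = (s/2) * ((1-x^2)^((5:ℝ)/18) * (1+x^2)^((4:ℝ)/9)) := by
      rw [Real.mul_rpow hsp.le (Real.sqrt_nonneg _), Real.mul_rpow hsp.le hB.le,
        Real.sqrt_eq_rpow, ← Real.rpow_mul hA.le,
        show ((1:ℝ)/2*((5:ℝ)/9)) = (5:ℝ)/18 by norm_num, mul_mul_mul_comm,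
        ← Real.rpow_add hsp, show ((5:ℝ)/9 + 4/9) = (1:ℝ) by norm_num, Real.rpow_one]
    rw [hsplit]
    apply mul_lt_mul_of_pos_left _ hsp
    rw [lt_div_iff₀ harsinh]
    have h := arsinh_lt_u hx hx1
    have hvw : (0:ℝ) < (1-x^2)^((5:ℝ)/18) * (1+x^2)^((4:ℝ)/9) :=
      mul_pos (Real.rpow_pos_of_pos hA _) (Real.rpow_pos_of_pos hB _)
    have m1 : (1-x^2:ℝ)^((5:ℝ)/18) * (1-x^2)^(-(5:ℝ)/18) = 1 := by
      rw [← Real.rpow_add hA]; norm_num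
    have m2 : (1+x^2:ℝ)^((4:ℝ)/9) * (1+x^2)^(-(4:ℝ)/9) = 1 := by
      rw [← Real.rpow_add hB]; norm_num
    calc (1-x^2)^((5:ℝ)/18) * (1+x^2)^((4:ℝ)/9) * arsinh x
        < (1-x^2)^((5:ℝ)/18) * (1+x^2)^((4:ℝ)/9) * (x * (1-x^2) ^ (-(5:ℝ)/18) * (1+x^2) ^ (-(4:ℝ)/9)) :=
          by exact mul_lt_mul_of_pos_left h hvw
      _ = x * ((1-x^2)^((5:ℝ)/18) * (1-x^2)^(-(5:ℝ)/18)) * ((1+x^2)^((4:ℝ)/9) * (1+x^2)^(-(4:ℝ)/9)) := by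
          ring
      _ = x := by rw [m1, m2]; ring
  · rw [hM, hC]
    apply mul_lt_mul_of_pos_left _ (by positivity : (0:ℝ) < s/2)
    rw [div_lt_iff₀ harsinh]
    have h := lt_arsinh_cubic hx hx1
    have h2 := mul_lt_mul_of_pos_left h hB
    nlinarith [h2, mul_pos (mul_pos hx hx) hx, hx1, hx]

lemma main1 : ∀ a b : ℝ, 0 < a → 0 < b → a ≠ b →
    G a b ^ ((5:ℝ)/9) * C a b ^ ((4:ℝ)/9) < M a b ∧ M a b < C a b := by
  intro a b ha hb hab
  rcases hab.lt_or_gt with h | h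
  · rw [G_symm, C_symm, M_symm]
    exact key1 b a hb ha h
  · exact key1 a b ha hb h



lemma G_pos {a b : ℝ} (ha : 0 < a) (hb : 0 < b) : 0 < G a b :=
  Real.sqrt_pos.2 (mul_pos ha hb)

lemma C_pos {a b : ℝ} (ha : 0 < a) (hb : 0 < b) : 0 < C a b :=
  div_pos (by positivity) (by linarith)

lemma G_lt_C {a b : ℝ} (ha : 0 < a) (hb : 0 < b) (hab : a ≠ b) : G a b < C a b := by
  unfold G C
  have h1 : √(a*b) ≤ (a+b)/2 := by
    rw [show (a+b)/2 = √(((a+b)/2)^2) by rw [Real.sqrt_sq (by positivity)]]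
    exact Real.sqrt_le_sqrt (by nlinarith [sq_nonneg (a-b)])
  have h2 : (a+b)/2 < (a^2+b^2)/(a+b) := by
    rw [div_lt_div_iff₀ (by norm_num) (by linarith)]
    have h3 : a - b ≠ 0 := sub_ne_zero.2 hab
    have h4 : 0 < (a-b)^2 := by positivity
    nlinarith
  linarith

-- decomposition: G^α C^(1-α) = C * (G/C)^α ... variant
lemma decompC {a b α : ℝ} (ha : 0 < a) (hb : 0 < b) :
    G a b ^ α * C a b ^ (1-α) = C a b * (G a b / C a b) ^ α := by
  have hG := G_pos ha hb
  have hC := C_pos ha hb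
  rw [show (1-α : ℝ) = 1 + (-α) by ring, Real.rpow_add hC, Real.rpow_one,
    Real.rpow_neg hC.le, Real.div_rpow hG.le hC.le]
  ring

lemma decomp59 {a b α : ℝ} (ha : 0 < a) (hb : 0 < b) :
    G a b ^ α * C a b ^ (1-α)
      = (G a b ^ ((5:ℝ)/9) * C a b ^ ((4:ℝ)/9)) * (G a b / C a b) ^ (α - 5/9) := by
  have hG := G_pos ha hb
  have hC := C_pos ha hb
  rw [show α = 5/9 + (α - 5/9) by ring, Real.rpow_add hG,
    show (1 - (5/9 + (α - 5/9)) : ℝ) = 4/9 - (α - 5/9) by ring, Real.rpow_sub hC,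
    Real.div_rpow hG.le hC.le]
  ring

lemma part2_rev {α : ℝ} (hα : 5/9 ≤ α) : ∀ a b : ℝ, 0 < a → 0 < b → a ≠ b →
    G a b ^ α * C a b ^ (1 - α) < M a b := by
  intro a b ha hb hab
  have h1 := (main1 a b ha hb hab).1
  have hG := G_pos ha hb
  have hC := C_pos ha hb
  have hGC := G_lt_C ha hb hab
  rw [decomp59 ha hb]
  have hle : (G a b / C a b) ^ (α - 5/9) ≤ 1 :=
    Real.rpow_le_one (by positivity) (by rw [div_le_one hC]; exact hGC.le) (by linarith)
  calc (G a b ^ ((5:ℝ)/9) * C a b ^ ((4:ℝ)/9)) * (G a b / C a b) ^ (α - 5/9)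
      ≤ G a b ^ ((5:ℝ)/9) * C a b ^ ((4:ℝ)/9) := by
        apply mul_le_of_le_one_right (by positivity) hle
    _ < M a b := h1

lemma C_le_weighted {a b β : ℝ} (ha : 0 < a) (hb : 0 < b) (hab : a ≠ b) (hβ : β ≤ 0) :
    C a b ≤ G a b ^ β * C a b ^ (1 - β) := by
  have hG := G_pos ha hb
  have hC := C_pos ha hb
  have hGC := G_lt_C ha hb hab
  rw [decompC ha hb]
  have hge : 1 ≤ (G a b / C a b) ^ β :=
    Real.one_le_rpow_of_pos_of_le_one_of_nonpos (by positivity)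
      (by rw [div_le_one hC]; exact hGC.le) hβ
  exact le_mul_of_one_le_right hC.le hge

lemma part3_rev {β : ℝ} (hβ : β ≤ 0) : ∀ a b : ℝ, 0 < a → 0 < b → a ≠ b →
    M a b < G a b ^ β * C a b ^ (1 - β) := by
  intro a b ha hb hab
  exact lt_of_lt_of_le (main1 a b ha hb hab).2 (C_le_weighted ha hb hab hβ)

-- normalized values
lemma norm_G (hx : 0 < x) (hx1 : x < 1) : G (1+x) (1-x) = √(1 - x^2) := by
  unfold G; congr 1; ring

lemma norm_C (hx : 0 < x) (hx1 : x < 1) : C (1+x) (1-x) = 1 + x^2 := by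
  unfold C
  rw [show (1+x) + (1-x) = 2 by ring]
  field_simp
  ring

lemma norm_M (hx : 0 < x) (hx1 : x < 1) : M (1+x) (1-x) = x / arsinh x := by
  unfold M
  rw [show (1+x) - (1-x) = 2*x by ring, show (1+x) + (1-x) = 2 by ring,
    show (2*x)/2 = x by ring]
  exact mul_div_mul_left x (arsinh x) two_ne_zero


lemma part3_fwd {β : ℝ} (hβ : 0 < β) :
    ∃ a b : ℝ, 0 < a ∧ 0 < b ∧ a ≠ b ∧ ¬(M a b < G a b ^ β * C a b ^ (1-β)) := by
  set ε : ℝ := min (exp (-3/β)) (1/2) with hε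
  have hε0 : 0 < ε := lt_min (exp_pos _) (by norm_num)
  have hε2 : ε ≤ 1/2 := min_le_right _ _
  have hεe : ε ≤ exp (-3/β) := min_le_left _ _
  set x : ℝ := √(1 - ε) with hxdef
  have h1ε : (0:ℝ) < 1 - ε := by linarith
  have hx2 : x^2 = 1 - ε := Real.sq_sqrt h1ε.le
  have hx : 0 < x := Real.sqrt_pos.2 h1ε
  have hx1 : x < 1 := by nlinarith [hx2, hε0, hx]
  refine ⟨1+x, 1-x, by linarith, by linarith, by intro h; nlinarith, ?_⟩
  rw [not_lt, norm_M hx hx1, norm_G hx hx1, norm_C hx hx1]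
  have hM1 : 1 < x / arsinh x :=
    (one_lt_div (Real.arsinh_pos_iff.2 hx)).2 (arsinh_lt_self hx)
  have hGb : (√(1-x^2)) ^ β = ε ^ (β/2) := by
    rw [hx2, show (1:ℝ) - (1-ε) = ε by ring, Real.sqrt_eq_rpow, ← Real.rpow_mul hε0.le,
      show (1:ℝ)/2*β = β/2 by ring]
  have h1 : ε ^ (β/2) ≤ exp (-(3:ℝ)/2) := by
    calc ε ^ (β/2) ≤ (exp (-3/β)) ^ (β/2) := Real.rpow_le_rpow hε0.le hεe (by positivity)
      _ = exp (-(3:ℝ)/2) := by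
          rw [← Real.exp_mul]
          congr 1
          field_simp
  have hC2 : (1 + x^2) ^ (1-β) ≤ 2 := by
    have hc1 : (1:ℝ) ≤ 1 + x^2 := by nlinarith
    calc (1+x^2)^(1-β) ≤ (1+x^2)^(1:ℝ) := Real.rpow_le_rpow_of_exponent_le hc1 (by linarith)
      _ = 1 + x^2 := Real.rpow_one _
      _ ≤ 2 := by nlinarith [hx2, hε0]
  have hprod : (√(1-x^2))^β * (1+x^2)^(1-β) ≤ exp (-(3:ℝ)/2) * 2 := by
    rw [hGb]
    apply mul_le_mul h1 hC2 (by positivity) (by positivity)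
  have hexp : exp (-(3:ℝ)/2) * 2 < 1 := by
    have h5 : (5:ℝ)/2 ≤ exp (3/2) := by
      have := Real.add_one_le_exp ((3:ℝ)/2); linarith
    have hi : (exp ((3:ℝ)/2))⁻¹ ≤ ((5:ℝ)/2)⁻¹ := by
      apply inv_anti₀ (by norm_num) h5
    rw [show (-(3:ℝ)/2) = -((3:ℝ)/2) by norm_num, Real.exp_neg]
    norm_num at hi ⊢
    linarith
  linarith

lemma log_lb1 {u : ℝ} (hu : 0 < u) (hu8 : u ≤ 1/8) : -u - (8/7)*u^2 ≤ log (1-u) := by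
  have h1u : (0:ℝ) < 1 - u := by linarith
  have h := Real.log_le_sub_one_of_pos (x := (1-u)⁻¹) (by positivity)
  rw [Real.log_inv] at h
  have h2 : (1-u)⁻¹ - 1 = u/(1-u) := by field_simp; ring
  have h3 : u/(1-u) ≤ u + (8/7)*u^2 := by
    rw [div_le_iff₀ h1u]; nlinarith
  linarith

lemma log_lb2 {u : ℝ} (hu : 0 < u) : u - u^2 ≤ log (1+u) := by
  have h1u : (0:ℝ) < 1 + u := by linarith
  have h := Real.log_le_sub_one_of_pos (x := (1+u)⁻¹) (by positivity)
  rw [Real.log_inv] at h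
  have h2 : (1+u)⁻¹ - 1 = -(u/(1+u)) := by field_simp; ring
  have h3 : u - u^2 ≤ u/(1+u) := by
    rw [le_div_iff₀ h1u]; nlinarith
  linarith

lemma part2_fwd {α : ℝ} (hα0 : 0 ≤ α) (hα : α < 5/9) :
    ∃ a b : ℝ, 0 < a ∧ 0 < b ∧ a ≠ b ∧ ¬(G a b ^ α * C a b ^ (1-α) < M a b) := by
  set u : ℝ := min (5/9 - α) (1/8) with hudef
  have hu : 0 < u := lt_min (by linarith) (by norm_num)
  have hu8 : u ≤ 1/8 := min_le_right _ _
  have huδ : u ≤ 5/9 - α := min_le_left _ _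
  set x : ℝ := √u with hxdef
  have hx : 0 < x := Real.sqrt_pos.2 hu
  have hx2 : x^2 = u := Real.sq_sqrt hu.le
  have hx1 : x < 1 := by nlinarith [hx2]
  refine ⟨1+x, 1-x, by linarith, by linarith, by intro h; nlinarith, ?_⟩
  rw [not_lt, norm_M hx hx1, norm_G hx hx1, norm_C hx hx1]
  have hcub : 0 < x - x^3/6 := by nlinarith [hx2]
  have hclt := lt_arsinh_cubic hx hx1
  have harsinh : 0 < arsinh x := Real.arsinh_pos_iff.2 hx
  have hu6 : (0:ℝ) < 1 - u/6 := by linarith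
  have hMle : x / arsinh x ≤ 1/(1 - u/6) := by
    have e : x/(x - x^3/6) = 1/(1 - u/6) := by
      rw [show x - x^3/6 = x*(1 - u/6) by rw [← hx2]; ring, div_mul_eq_div_div,
        div_self hx.ne']
    rw [← e]
    exact div_le_div_of_nonneg_left hx.le hcub hclt.le
  have hMu : x / arsinh x ≤ 1 + u/6 + u^2/12 := by
    refine hMle.trans ?_
    rw [div_le_iff₀ hu6]; nlinarith
  have hG' : (√(1-x^2))^α = exp (log (1-u) * (α/2)) := by
    rw [hx2, Real.sqrt_eq_rpow, ← Real.rpow_mul (by linarith : (0:ℝ) ≤ 1-u),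
      Real.rpow_def_of_pos (by linarith : (0:ℝ) < 1-u)]
    ring_nf
  have hC' : (1+x^2)^(1-α) = exp (log (1+u) * (1-α)) := by
    rw [hx2, Real.rpow_def_of_pos (by linarith : (0:ℝ) < 1+u)]
  have hRHS : 1 + ((-u - (8/7)*u^2) * (α/2) + (u - u^2)*(1-α))
      ≤ (√(1-x^2))^α * (1+x^2)^(1-α) := by
    rw [hG', hC', ← Real.exp_add]
    have hb1 : (-u - (8/7)*u^2) * (α/2) ≤ log (1-u) * (α/2) :=
      mul_le_mul_of_nonneg_right (log_lb1 hu hu8) (by linarith)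
    have hb2 : (u - u^2)*(1-α) ≤ log (1+u) * (1-α) :=
      mul_le_mul_of_nonneg_right (log_lb2 hu) (by linarith)
    have h := Real.add_one_le_exp (log (1-u)*(α/2) + log (1+u)*(1-α))
    linarith
  have final : 1 + u/6 + u^2/12 ≤ 1 + ((-u - (8/7)*u^2) * (α/2) + (u - u^2)*(1-α)) := by
    nlinarith [mul_le_mul_of_nonneg_left huδ hu.le, mul_nonneg hα0 (sq_nonneg u), hu, hu8]
  linarith

lemma part2_fwd_neg {α : ℝ} (hα : α < 0) :
    ∃ a b : ℝ, 0 < a ∧ 0 < b ∧ a ≠ b ∧ ¬(G a b ^ α * C a b ^ (1-α) < M a b) := by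
  refine ⟨2, 1, by norm_num, by norm_num, by norm_num, ?_⟩
  rw [not_lt]
  have h2 := (main1 2 1 (by norm_num) (by norm_num) (by norm_num)).2
  have h3 := C_le_weighted (a := 2) (b := 1) (by norm_num) (by norm_num) (by norm_num) hα.le
  linarith


end helpers

theorem stmt4 :
    (∀ a b : ℝ, 0 < a → 0 < b → a ≠ b →
      G a b ^ ((5 : ℝ) / 9) * C a b ^ ((4 : ℝ) / 9) < M a b ∧ M a b < C a b) ∧
    (∀ α : ℝ, (∀ a b : ℝ, 0 < a → 0 < b → a ≠ b →
      G a b ^ α * C a b ^ (1 - α) < M a b) ↔ 5 / 9 ≤ α) ∧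
    (∀ β : ℝ, (∀ a b : ℝ, 0 < a → 0 < b → a ≠ b →
      M a b < G a b ^ β * C a b ^ (1 - β)) ↔ β ≤ 0) := by
  refine ⟨main1, ?_, ?_⟩
  · intro α
    constructor
    · intro h
      by_contra hc
      push_neg at hc
      rcases lt_or_ge α 0 with hneg | hpos
      · obtain ⟨a, b, ha, hb, hab, hn⟩ := part2_fwd_neg hneg
        exact hn (h a b ha hb hab)
      · obtain ⟨a, b, ha, hb, hab, hn⟩ := part2_fwd hpos hc
        exact hn (h a b ha hb hab)
    · exact part2_rev
  · intro β
    constructor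
    · intro h
      by_contra hc
      push_neg at hc
      obtain ⟨a, b, ha, hb, hab, hn⟩ := part3_fwd hc
      exact hn (h a b ha hb hab)
    · exact part3_rev
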